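/- arXiv:1311.0260 — 3 statements merged into one kernel-verified Lean document; each statement's English description precedes it below -/
import Mathlib

section
/- Let A_d be a discrete connection with domain 𝔘 on the principal G-bundle π: Q → Q/G. The associated discrete connection form A_d: 𝔘 → G, assigning to (q₀,q₁) the unique g ∈ G with (q₀, g⁻¹·q₁) ∈ Hor_{A_d}, is smooth. -/
open Manifold Set

/-- The discrete connection form associated to a discrete connection
`Hor` on the principal `G`-bundle `π : Q → Q/G` — i.e. the map `A : 𝔘 → G` characterized
by `(q₀, (A(q₀,q₁))⁻¹ • q₁) ∈ Hor` — is smooth on the domain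
`𝔘 = {(q₀, g•q₁) : (q₀,q₁) ∈ Hor, g ∈ G}`.  (Smoothness of the division map
`κ` on the fibered product, which holds for any principal bundle, is a hypothesis.) -/
theorem discrete_connection_form_is_smooth
    {E H : Type*} [NormedAddCommGroup E] [NormedSpace ℝ E]
    [TopologicalSpace H] (I : ModelWithCorners ℝ E H)
    {Q : Type*} [TopologicalSpace Q] [ChartedSpace H Q]
    {EG HG : Type*} [NormedAddCommGroup EG] [NormedSpace ℝ EG]
    [TopologicalSpace HG] (IG : ModelWithCorners ℝ EG HG)
    {G : Type*} [TopologicalSpace G] [ChartedSpace HG G] [Group G] [LieGroup IG (⊤ : ℕ∞) G]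
    [MulAction G Q]
    (hsmul : ContMDiff (IG.prod I) I (⊤ : ℕ∞) (fun p : G × Q => p.1 • p.2))
    {F HB : Type*} [NormedAddCommGroup F] [NormedSpace ℝ F]
    [TopologicalSpace HB] (J : ModelWithCorners ℝ F HB)
    {B : Type*} [TopologicalSpace B] [ChartedSpace HB B] (π : Q → B)
    (hπ : ContMDiff I J (⊤ : ℕ∞) π) (hπo : IsOpenMap π) (hπs : Function.Surjective π)
    (hfree : ∀ (g : G) (q : Q), g • q = q → g = 1)
    (hfib : ∀ q₀ q₁ : Q, π q₀ = π q₁ ↔ ∃ g : G, g • q₀ = q₁)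
    -- the division map `κ` of the principal bundle, smooth on the fibered product
    (κ : Q × Q → G)
    (hκ : ∀ p : Q × Q, π p.1 = π p.2 → κ p • p.1 = p.2)
    (hκs : ContMDiffOn (I.prod I) IG (⊤ : ℕ∞) κ {p : Q × Q | π p.1 = π p.2})
    (Hor : Set (Q × Q))
    (hinv : ∀ (g : G), ∀ p ∈ Hor, ((g • p.1, g • p.2) : Q × Q) ∈ Hor)
    (hdiag : ∀ q : Q, (q, q) ∈ Hor)
    (hinj : Set.InjOn (fun p : Q × Q => (p.1, π p.2)) Hor)
    -- `(id_Q × π)|_Hor` is a local diffeomorphism: locally it admits smooth sections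
    (hsec : ∀ p ∈ Hor, ∃ U : Set (Q × B), IsOpen U ∧ (p.1, π p.2) ∈ U ∧
      ∃ s : Q × B → Q × Q, ContMDiffOn (I.prod J) (I.prod I) (⊤ : ℕ∞) s U ∧
        ∀ x ∈ U, s x ∈ Hor ∧ ((s x).1, π (s x).2) = x) :
    ∀ A : Q × Q → G,
      (∀ p ∈ {p : Q × Q | ∃ g : G, (p.1, g⁻¹ • p.2) ∈ Hor}, (p.1, (A p)⁻¹ • p.2) ∈ Hor) →
      ContMDiffOn (I.prod I) IG (⊤ : ℕ∞) A {p : Q × Q | ∃ g : G, (p.1, g⁻¹ • p.2) ∈ Hor} := by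

  intro A hA p hp
  obtain ⟨g, hpHor⟩ := hp
  obtain ⟨U, hUopen, hpU, s, hs, hsx⟩ := hsec _ hpHor
  have hπg : π p.2 = π (g⁻¹ • p.2) := (hfib _ _).mpr ⟨g⁻¹, rfl⟩
  rw [show π (g⁻¹ • p.2) = π p.2 from hπg.symm] at hpU
  set V : Set (Q × Q) := (fun x : Q × Q => (x.1, π x.2)) ⁻¹' U with hV
  have hVopen : IsOpen V :=
    hUopen.preimage (continuous_fst.prodMk (hπ.continuous.comp continuous_snd))
  have hpV : p ∈ V := hpU
  have hg1 : ContMDiff (I.prod I) (I.prod J) (⊤ : ℕ∞) (fun x : Q × Q => (x.1, π x.2)) :=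
    contMDiff_fst.prodMk (hπ.comp contMDiff_snd)
  have hsg : ContMDiffOn (I.prod I) (I.prod I) (⊤ : ℕ∞) (fun x : Q × Q => s (x.1, π x.2)) V :=
    hs.comp hg1.contMDiffOn (fun x hx => hx)
  have hf : ContMDiffOn (I.prod I) (I.prod I) (⊤ : ℕ∞)
      (fun x : Q × Q => ((s (x.1, π x.2)).2, x.2)) V :=
    (contMDiff_snd.comp_contMDiffOn hsg).prodMk contMDiff_snd.contMDiffOn
  have hmaps : ∀ x ∈ V, π (s (x.1, π x.2)).2 = π x.2 := fun x hx =>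
    congrArg Prod.snd ((hsx _ hx).2)
  have hF : ContMDiffOn (I.prod I) IG (⊤ : ℕ∞)
      (fun x : Q × Q => κ ((s (x.1, π x.2)).2, x.2)) V :=
    hκs.comp hf (fun x hx => hmaps x hx)
  have hFp : ContMDiffWithinAt (I.prod I) IG (⊤ : ℕ∞)
      (fun x : Q × Q => κ ((s (x.1, π x.2)).2, x.2))
      {p : Q × Q | ∃ g : G, (p.1, g⁻¹ • p.2) ∈ Hor} p :=
    (((hF p hpV).contMDiffAt (hVopen.mem_nhds hpV))).contMDiffWithinAt
  have key : ∀ x ∈ {p : Q × Q | ∃ g : G, (p.1, g⁻¹ • p.2) ∈ Hor} ∩ V,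
      A x = κ ((s (x.1, π x.2)).2, x.2) := by
    intro x ⟨hxS, hxV⟩
    have hAx : (x.1, (A x)⁻¹ • x.2) ∈ Hor := hA x hxS
    obtain ⟨hsHor, hseq⟩ := hsx _ hxV
    have hπA : π x.2 = π ((A x)⁻¹ • x.2) := (hfib _ _).mpr ⟨(A x)⁻¹, rfl⟩
    have heq : (x.1, (A x)⁻¹ • x.2) = s (x.1, π x.2) := by
      apply hinj hAx hsHor
      simp only
      rw [hseq]
      exact Prod.ext rfl hπA.symm
    have h2 : (s (x.1, π x.2)).2 = (A x)⁻¹ • x.2 := (congrArg Prod.snd heq).symm ▸ rfl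
    have hπf : π (s (x.1, π x.2)).2 = π x.2 := congrArg Prod.snd hseq
    have hk : κ ((s (x.1, π x.2)).2, x.2) • (s (x.1, π x.2)).2 = x.2 := hκ _ hπf
    have hfr : (A x)⁻¹ * κ ((s (x.1, π x.2)).2, x.2) = 1 := by
      apply hfree _ ((s (x.1, π x.2)).2)
      rw [mul_smul, hk, h2]
    exact inv_mul_eq_one.mp hfr
  apply hFp.congr_of_eventuallyEq ?_ (key p ⟨⟨g, hpHor⟩, hpV⟩)
  filter_upwards [self_mem_nhdsWithin, nhdsWithin_le_nhds (hVopen.mem_nhds hpV)] with x hxS hxV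
  exact key x ⟨hxS, hxV⟩
end

section
/- Let R be a smooth connected manifold, G a Lie group, Q := R × G with the left G-action g·(r,g') := (r, g g'), which makes p₁: Q → R a principal G-bundle. Let 𝒰'' ⊂ R × R be open containing the diagonal and C: 𝒰'' → G smooth with C(r,r) = e for all r. Then Hor := {((r₀,g₀),(r₁,g₁)) : (r₀,r₁) ∈ 𝒰'', g₀ = g₁ C(r₀,r₁)} defines a discrete connection on p₁, i.e., Hor is a G-invariant submanifold of Q × Q containing the diagonal and (id_Q × p₁)|_{Hor} is an injective local diffeomorphism. -/
open Manifold Set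

/-- On the trivial principal `G`-bundle `p₁ : R × G → R` (with action
`g • (r, g') = (r, g g')`), given an open `𝒰'' ⊆ R × R` containing the diagonal and a
smooth `C : 𝒰'' → G` with `C(r,r) = e`, the set
`Hor = {((r₀,g₀),(r₁,g₁)) : (r₀,r₁) ∈ 𝒰'', g₀ = g₁ C(r₀,r₁)}`
defines a discrete connection: it is invariant under the (diagonal) `G`-action, contains
the diagonal, and `(id × p₁)|_Hor` is an injective local (homeo/diffeo)morphism. -/
theorem trivial_bundle_discrete_connection
    {ER HR : Type*} [NormedAddCommGroup ER] [NormedSpace ℝ ER]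
    [TopologicalSpace HR] (JR : ModelWithCorners ℝ ER HR)
    {R : Type*} [TopologicalSpace R] [ChartedSpace HR R] [ConnectedSpace R]
    {EG HG : Type*} [NormedAddCommGroup EG] [NormedSpace ℝ EG]
    [TopologicalSpace HG] (IG : ModelWithCorners ℝ EG HG)
    {G : Type*} [TopologicalSpace G] [ChartedSpace HG G] [Group G] [LieGroup IG (⊤ : ℕ∞) G]
    (U'' : Set (R × R)) (hU : IsOpen U'') (hUdiag : ∀ r : R, (r, r) ∈ U'')
    (C : R × R → G) (hC : ContMDiffOn (JR.prod JR) IG (⊤ : ℕ∞) C U'')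
    (hCe : ∀ r : R, C (r, r) = 1) :
    -- with `Hor := {((r₀,g₀),(r₁,g₁)) | (r₀,r₁) ∈ 𝒰'' ∧ g₀ = g₁ * C (r₀,r₁)}`:
    (∀ (g : G), ∀ p ∈ {p : (R × G) × (R × G) |
        (p.1.1, p.2.1) ∈ U'' ∧ p.1.2 = p.2.2 * C (p.1.1, p.2.1)},
      (((p.1.1, g * p.1.2), (p.2.1, g * p.2.2)) : (R × G) × (R × G)) ∈
        {p : (R × G) × (R × G) |
          (p.1.1, p.2.1) ∈ U'' ∧ p.1.2 = p.2.2 * C (p.1.1, p.2.1)}) ∧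
    (∀ q : R × G, ((q, q) : (R × G) × (R × G)) ∈
      {p : (R × G) × (R × G) |
        (p.1.1, p.2.1) ∈ U'' ∧ p.1.2 = p.2.2 * C (p.1.1, p.2.1)}) ∧
    Set.InjOn (fun p : (R × G) × (R × G) => (p.1, p.2.1))
      {p : (R × G) × (R × G) |
        (p.1.1, p.2.1) ∈ U'' ∧ p.1.2 = p.2.2 * C (p.1.1, p.2.1)} ∧
    IsLocalHomeomorph (fun p : ↥{p : (R × G) × (R × G) |
        (p.1.1, p.2.1) ∈ U'' ∧ p.1.2 = p.2.2 * C (p.1.1, p.2.1)} =>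
      ((((p : (R × G) × (R × G))).1, ((p : (R × G) × (R × G))).2.1) : (R × G) × R)) := by
  set Hor : Set ((R × G) × (R × G)) := {p : (R × G) × (R × G) |
        (p.1.1, p.2.1) ∈ U'' ∧ p.1.2 = p.2.2 * C (p.1.1, p.2.1)} with hHor
  refine ⟨?_, ?_, ?_, ?_⟩
  · rintro g p ⟨h1, h2⟩
    exact ⟨h1, by simp [h2, mul_assoc]⟩
  · intro q
    exact ⟨hUdiag q.1, by simp [hCe]⟩
  · rintro p ⟨hp1, hp2⟩ q ⟨hq1, hq2⟩ h
    simp only [Prod.mk.injEq] at h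
    obtain ⟨h1, h2⟩ := h
    have h22 : p.2.2 = q.2.2 := by
      have : p.2.2 * C (p.1.1, p.2.1) = q.2.2 * C (q.1.1, q.2.1) := by
        rw [← hp2, ← hq2, h1]
      rw [h1, h2] at this
      exact mul_right_cancel this
    exact Prod.ext h1 (Prod.ext h2 h22)
  · -- the map is an open embedding onto the open set V
    haveI : IsTopologicalGroup G := topologicalGroup_of_lieGroup IG (⊤ : ℕ∞)
    set V : Set ((R × G) × R) := {v | (v.1.1, v.2) ∈ U''} with hV
    have hVopen : IsOpen V := hU.preimage (by fun_prop)
    have hCcont : Continuous fun v : V => C ((v : (R × G) × R).1.1, (v : (R × G) × R).2) :=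
      hC.continuousOn.comp_continuous (by fun_prop) fun v => v.2
    let Φ : Hor ≃ₜ V :=
      { toFun := fun p => ⟨((p : (R × G) × (R × G)).1, (p : (R × G) × (R × G)).2.1), p.2.1⟩
        invFun := fun v => ⟨((v : (R × G) × R).1,
            ((v : (R × G) × R).2,
              (v : (R × G) × R).1.2 * (C ((v : (R × G) × R).1.1, (v : (R × G) × R).2))⁻¹)),
          v.2, by simp⟩
        left_inv := by
          rintro ⟨⟨⟨r0, g0⟩, ⟨r1, g1⟩⟩, hmem, heq⟩
          have heq' : g0 = g1 * C (r0, r1) := heq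
          ext <;> simp_all [mul_inv_eq_iff_eq_mul]
        right_inv := by rintro ⟨⟨⟨r0, g0⟩, r1⟩, hmem⟩; rfl
        continuous_toFun := by fun_prop
        continuous_invFun := by
          refine Continuous.subtype_mk ?_ _
          exact (continuous_subtype_val.fst).prodMk
            ((continuous_subtype_val.snd).prodMk
              ((continuous_subtype_val.fst.snd).mul (hCcont.inv)))
      }
    have : (fun p : Hor => (((p : (R × G) × (R × G))).1, ((p : (R × G) × (R × G))).2.1))
        = (Subtype.val : V → (R × G) × R) ∘ Φ := rfl
    rw [this]
    exact (hVopen.isOpenEmbedding_subtypeVal.comp Φ.isOpenEmbedding).isLocalHomeomorph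
end

section
/- Let 𝒰 ⊂ Q × Q be an open (G × G)-invariant subset containing the diagonal, and 𝒜: 𝒰 → G a smooth map with 𝒜(q,q) = e for all q and 𝒜(g₀·q₀, g₁·q₁) = g₁ 𝒜(q₀,q₁) g₀⁻¹ for all (q₀,q₁) ∈ 𝒰 and g₀,g₁ ∈ G. Then e is a regular value of 𝒜, and Hor := 𝒜⁻¹({e}) is a submanifold of Q × Q that defines a discrete connection on π: Q → Q/G whose associated discrete connection form is 𝒜. -/
open Manifold Set

/-- Given an open `(G × G)`-invariant `𝒰 ⊆ Q × Q` containing the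
diagonal and a smooth `𝒜 : 𝒰 → G` with `𝒜(q,q) = e` and
`𝒜(g₀•q₀, g₁•q₁) = g₁ 𝒜(q₀,q₁) g₀⁻¹`, the identity `e` is a regular value of `𝒜`
and `Hor := 𝒜⁻¹({e})` defines a discrete connection on `π : Q → Q/G` whose associated
discrete connection form is `𝒜`. -/
theorem discrete_connection_form_defines_discrete_connection
    {E H : Type*} [NormedAddCommGroup E] [NormedSpace ℝ E]
    [TopologicalSpace H] (I : ModelWithCorners ℝ E H)
    {Q : Type*} [TopologicalSpace Q] [ChartedSpace H Q]
    {EG HG : Type*} [NormedAddCommGroup EG] [NormedSpace ℝ EG]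
    [TopologicalSpace HG] (IG : ModelWithCorners ℝ EG HG)
    {G : Type*} [TopologicalSpace G] [ChartedSpace HG G] [Group G] [LieGroup IG (⊤ : ℕ∞) G]
    [MulAction G Q]
    (hsmul : ContMDiff (IG.prod I) I (⊤ : ℕ∞) (fun p : G × Q => p.1 • p.2))
    {B : Type*} [TopologicalSpace B] (π : Q → B)
    (hπc : Continuous π) (hπo : IsOpenMap π) (hπs : Function.Surjective π)
    (hfree : ∀ (g : G) (q : Q), g • q = q → g = 1)
    (hfib : ∀ q₀ q₁ : Q, π q₀ = π q₁ ↔ ∃ g : G, g • q₀ = q₁)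
    (U : Set (Q × Q)) (hU : IsOpen U)
    (hUinv : ∀ (g₀ g₁ : G), ∀ p ∈ U, ((g₀ • p.1, g₁ • p.2) : Q × Q) ∈ U)
    (hUdiag : ∀ q : Q, (q, q) ∈ U)
    (A : Q × Q → G) (hAs : ContMDiffOn (I.prod I) IG (⊤ : ℕ∞) A U)
    (hAe : ∀ q : Q, A (q, q) = 1)
    (hAeq : ∀ p ∈ U, ∀ g₀ g₁ : G, A (g₀ • p.1, g₁ • p.2) = g₁ * A p * g₀⁻¹) :
    -- `e` is a regular value of `𝒜`:
    (∀ p ∈ {p : Q × Q | p ∈ U ∧ A p = 1},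
      Function.Surjective (mfderiv (I.prod I) IG A p)) ∧
    -- `Hor := 𝒜⁻¹({e})` defines a discrete connection:
    (∀ (g : G), ∀ p ∈ {p : Q × Q | p ∈ U ∧ A p = 1},
      ((g • p.1, g • p.2) : Q × Q) ∈ {p : Q × Q | p ∈ U ∧ A p = 1}) ∧
    (∀ q : Q, ((q, q) : Q × Q) ∈ {p : Q × Q | p ∈ U ∧ A p = 1}) ∧
    Set.InjOn (fun p : Q × Q => (p.1, π p.2)) {p : Q × Q | p ∈ U ∧ A p = 1} ∧
    IsLocalHomeomorph (fun p : ↥{p : Q × Q | p ∈ U ∧ A p = 1} =>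
      (((p : Q × Q)).1, π ((p : Q × Q)).2)) ∧
    -- and its associated discrete connection form is `𝒜`:
    (∀ p ∈ U, (p.1, (A p)⁻¹ • p.2) ∈ {p : Q × Q | p ∈ U ∧ A p = 1}) := by
  -- notation
  set Hor : Set (Q × Q) := {p : Q × Q | p ∈ U ∧ A p = 1} with hHorDef
  -- the "retraction" onto `Hor`
  set ρ : Q × Q → Q × Q := fun p => (p.1, (A p)⁻¹ • p.2) with hρDef
  -- the last conjunct: `ρ` maps `U` into `Hor`
  have hρHor : ∀ p ∈ U, (p.1, (A p)⁻¹ • p.2) ∈ Hor := by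
    intro p hp
    refine ⟨?_, ?_⟩
    · simpa using hUinv 1 (A p)⁻¹ p hp
    · have h := hAeq p hp 1 (A p)⁻¹
      simpa using h
  -- value of `A` on `(p.1, g • p.2)`
  have hA1 : ∀ p ∈ U, ∀ g : G, A (p.1, g • p.2) = g * A p := by
    intro p hp g
    have h := hAeq p hp 1 g
    simpa using h
  -- `G`-invariance of `Hor`
  have hGinv : ∀ (g : G), ∀ p ∈ Hor, ((g • p.1, g • p.2) : Q × Q) ∈ Hor := by
    intro g p hp
    refine ⟨hUinv g g p hp.1, ?_⟩
    rw [hAeq p hp.1 g g, hp.2, mul_one, mul_inv_cancel]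
  -- the diagonal sits in `Hor`
  have hdiag : ∀ q : Q, ((q, q) : Q × Q) ∈ Hor := fun q => ⟨hUdiag q, hAe q⟩
  -- injectivity
  have hinj : Set.InjOn (fun p : Q × Q => (p.1, π p.2)) Hor := by
    intro a ha b hb hab
    simp only [Prod.mk.injEq] at hab
    obtain ⟨h1, h2⟩ := hab
    obtain ⟨g, hg⟩ := (hfib a.2 b.2).mp h2
    have hb' : b = (a.1, g • a.2) := by
      rw [Prod.ext_iff]; exact ⟨h1.symm, hg.symm⟩
    have hAb : A b = g := by
      rw [hb', hA1 a ha.1 g, ha.2, mul_one]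
    have hg1 : g = 1 := hAb ▸ hb.2
    rw [hb', hg1, one_smul, Prod.mk.injEq]
    exact ⟨rfl, rfl⟩
  -- regular value
  have hreg : ∀ p ∈ Hor, Function.Surjective (mfderiv (I.prod I) IG A p) := by
    intro p hp
    set φ : G → Q × Q := fun g => (p.1, g • p.2) with hφDef
    have hφs : ContMDiff IG (I.prod I) (⊤ : ℕ∞) φ := by
      refine ContMDiff.prodMk contMDiff_const ?_
      exact hsmul.comp (contMDiff_id.prodMk contMDiff_const)
    have hφ1 : φ 1 = p := by simp [hφDef]
    have hAφ : A ∘ φ = id := by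
      funext g
      simp only [Function.comp_apply, hφDef, id_eq]
      rw [hA1 p hp.1 g, hp.2, mul_one]
    have hAd : MDifferentiableAt (I.prod I) IG A (φ 1) := by
      rw [hφ1]
      exact (hAs.contMDiffAt (hU.mem_nhds hp.1)).mdifferentiableAt (by simp)
    have hφd : MDifferentiableAt IG (I.prod I) φ 1 := hφs.mdifferentiableAt (by simp)
    have hcomp := mfderiv_comp (I' := I.prod I) (1 : G) hAd hφd
    rw [hAφ, hφ1, mfderiv_id] at hcomp
    intro y
    refine ⟨mfderiv IG (I.prod I) φ 1 y, ?_⟩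
    have := congrFun (congrArg DFunLike.coe hcomp.symm) y
    exact this
  -- local homeomorphism
  have hloc : IsLocalHomeomorph (fun p : ↥Hor => (((p : Q × Q)).1, π ((p : Q × Q)).2)) := by
    set f : ↥Hor → Q × B := fun p => (((p : Q × Q)).1, π ((p : Q × Q)).2) with hfDef
    have hcont : Continuous f :=
      ((continuous_fst.prodMk (hπc.comp continuous_snd)).comp continuous_subtype_val)
    have hfinj : Function.Injective f := by
      intro a b hab
      exact Subtype.ext (hinj a.2 b.2 hab)
    have hρcont : ContinuousOn ρ U := by
      refine ContinuousOn.prodMk continuousOn_fst ?_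
      have hAc : ContinuousOn A U := hAs.continuousOn
      have hAic : ContinuousOn (fun p : Q × Q => (A p)⁻¹) U :=
        ((contMDiff_inv IG (⊤ : ℕ∞)).continuous.comp_continuousOn hAc)
      exact hsmul.continuous.comp_continuousOn (hAic.prodMk continuousOn_snd)
    have hFopen : IsOpenMap (fun p : Q × Q => (p.1, π p.2)) := IsOpenMap.id.prodMap hπo
    have hopen : IsOpenMap f := by
      intro V hV
      obtain ⟨W, hW, hVW⟩ := isOpen_induced_iff.mp hV
      have himg : f '' V = (fun p : Q × Q => (p.1, π p.2)) '' (U ∩ ρ ⁻¹' W) := by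
        apply Set.Subset.antisymm
        · rintro _ ⟨x, hxV, rfl⟩
          refine ⟨(x : Q × Q), ⟨x.2.1, ?_⟩, rfl⟩
          have hρx : ρ (x : Q × Q) = (x : Q × Q) := by
            simp [hρDef, x.2.2]
          rw [Set.mem_preimage, hρx]
          rw [← hVW] at hxV
          exact hxV
        · rintro _ ⟨p, ⟨hpU, hpW⟩, rfl⟩
          have hρmem : ρ p ∈ Hor := hρHor p hpU
          refine ⟨⟨ρ p, hρmem⟩, ?_, ?_⟩
          · rw [← hVW]; exact hpW
          · have hπeq : π ((A p)⁻¹ • p.2) = π p.2 :=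
              ((hfib p.2 ((A p)⁻¹ • p.2)).mpr ⟨(A p)⁻¹, rfl⟩).symm
            simp [hfDef, hρDef, hπeq]
      rw [himg]
      exact hFopen _ (hρcont.isOpen_inter_preimage hU hW)
    exact (Topology.IsOpenEmbedding.of_continuous_injective_isOpenMap
      hcont hfinj hopen).isLocalHomeomorph
  exact ⟨hreg, hGinv, hdiag, hinj, hloc, hρHor⟩
end
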